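/- arXiv:1103.1859 — 4 statements merged into one kernel-verified Lean document; each statement's English description precedes it below -/
import Mathlib

section
/- Consider an LC circuit with Kirchhoff constraint matrix K = (K_Lᵀ, K_Cᵀ)ᵀ ∈ ℝ^{n×m} partitioned into inductor rows K_L ∈ ℝ^{n_L×m} and capacitor rows K_C ∈ ℝ^{n_C×m}, and loop matrix K₂ ∈ ℝ^{n×(n−m)} with full column rank and range(K₂) = ker(Kᵀ). Let L = diag(L₁,…,L_{n_L},0,…,0) with L_i > 0 on inductor branches. If K_Cᵀ has trivial kernel (equivalently, rank(K_Cᵀ) = n_C), then K₂ᵀ L K₂ is invertible. -/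
open scoped Matrix


/-- Proposition 1: for an LC circuit with `K = (K_Lᵀ, K_Cᵀ)ᵀ`, loop matrix `K₂`
with full column rank and `range(K₂) = ker(Kᵀ)`, inductance matrix
`L = diag(L_L, 0)` with positive entries on inductor branches, if `K_Cᵀ` has
trivial kernel then `K₂ᵀ L K₂` is invertible. -/
theorem stmt2 {nL nC m k : ℕ}
    (KL : Matrix (Fin nL) (Fin m) ℝ) (KC : Matrix (Fin nC) (Fin m) ℝ)
    (K₂ : Matrix (Fin nL ⊕ Fin nC) (Fin k) ℝ)
    (d : Fin nL ⊕ Fin nC → ℝ)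
    (hdL : ∀ i : Fin nL, 0 < d (Sum.inl i))
    (hdC : ∀ j : Fin nC, d (Sum.inr j) = 0)
    (hrank : Function.Injective K₂.mulVec)
    (hrange : ∀ x : Fin nL ⊕ Fin nC → ℝ,
      (∃ y, K₂.mulVec y = x) ↔ (Matrix.fromRows KL KC).transpose.mulVec x = 0)
    (hKC : ∀ vC : Fin nC → ℝ, KC.transpose.mulVec vC = 0 → vC = 0) :
    IsUnit (K₂.transpose * Matrix.diagonal d * K₂) := by
  rw [← Matrix.mulVec_injective_iff_isUnit]
  have hker : ∀ y, (K₂.transpose * Matrix.diagonal d * K₂).mulVec y = 0 → y = 0 := by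
    intro y hy
    set x := K₂.mulVec y with hx
    -- quadratic form is zero
    have hq : (x ᵥ* Matrix.diagonal d) ⬝ᵥ x = 0 := by
      have : y ⬝ᵥ (K₂.transpose * Matrix.diagonal d * K₂).mulVec y = 0 := by
        rw [hy, dotProduct_zero]
      rwa [Matrix.dotProduct_mulVec, ← Matrix.vecMul_vecMul,
        ← Matrix.vecMul_vecMul, Matrix.vecMul_transpose,
        ← Matrix.dotProduct_mulVec] at this
    have hsum : ∑ i : Fin nL ⊕ Fin nC, d i * x i ^ 2 = 0 := by
      rw [← hq, dotProduct]
      refine Finset.sum_congr rfl fun i _ => ?_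
      rw [Matrix.vecMul_diagonal]
      ring
    have hnn : ∀ i, 0 ≤ d i * x i ^ 2 := by
      rintro (i | j)
      · exact mul_nonneg (hdL i).le (sq_nonneg _)
      · rw [hdC j, zero_mul]
    have hzero : ∀ i, d i * x i ^ 2 = 0 :=
      fun i => (Finset.sum_eq_zero_iff_of_nonneg (fun i _ => hnn i)).mp hsum i
        (Finset.mem_univ i)
    have hxL : ∀ i : Fin nL, x (Sum.inl i) = 0 := by
      intro i
      have := hzero (Sum.inl i)
      have hd := hdL i
      have h2 : x (Sum.inl i) ^ 2 = 0 := by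
        rcases mul_eq_zero.mp this with h | h
        · exact absurd h hd.ne'
        · exact h
      exact pow_eq_zero_iff two_ne_zero |>.mp h2
    -- x is in the range of K₂
    have hK : (Matrix.fromRows KL KC).transpose.mulVec x = 0 :=
      (hrange x).mp ⟨y, rfl⟩
    have hxe : x = Sum.elim (fun i => x (Sum.inl i)) (fun j => x (Sum.inr j)) := by
      funext i; cases i <;> rfl
    rw [Matrix.transpose_fromRows, hxe, Matrix.fromCols_mulVec_sumElim] at hK
    have hL0 : (fun i => x (Sum.inl i)) = (0 : Fin nL → ℝ) := funext hxL
    rw [hL0, Matrix.mulVec_zero, zero_add] at hK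
    have hxC := hKC _ hK
    have hx0 : x = 0 := by
      rw [hxe, hL0, hxC]
      funext i; cases i <;> rfl
    exact hrank (by rw [← hx, hx0, Matrix.mulVec_zero])
  intro a b hab
  have : (K₂.transpose * Matrix.diagonal d * K₂).mulVec (a - b) = 0 := by
    rw [Matrix.mulVec_sub, hab, sub_self]
  exact sub_eq_zero.mp (hker _ this)
end

section
/- Suppose (q, v, p): [0,T] → ℝⁿ × ℝⁿ × ℝⁿ solves the constrained Euler-Lagrange system: ∂L/∂q(q,v) − dp/dt + f_L(q,v,t) ∈ range(K), dq/dt = v, p = ∂L/∂v(q,v), Kᵀv = 0. Let K₂⁺ be a left inverse of K₂ (K₂⁺K₂ = I) and set q̃ = K₂⁺q, ṽ = K₂⁺v, p̃ = K₂ᵀp. If q and v take values in range(K₂) and ker(K₂ᵀ) = range(K), then (q̃, ṽ, p̃) solves the reduced system: dp̃/dt = ∂L^M/∂q̃ + f_L^M, dq̃/dt = ṽ, p̃ = ∂L^M/∂ṽ. -/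
open Matrix Set

private lemma deriv_mulVec {n k : ℕ} (M : Matrix (Fin k) (Fin n) ℝ)
    (f : ℝ → Fin n → ℝ) (f' : Fin n → ℝ) {t : ℝ} (h : HasDerivAt f f' t) :
    HasDerivAt (fun s => M.mulVec (f s)) (M.mulVec f') t := by
  have := ((Matrix.mulVecLin M).toContinuousLinearMap.hasFDerivAt (x := f t)).comp_hasDerivAt t h
  simpa [Function.comp_def] using this

/-- Equivalence theorem, direction (ii): a solution `(q, v, p)` of the full
constrained Euler–Lagrange system with `q, v` taking values in `range(K₂)`
yields, via `qr = K₂⁺q`, `vr = K₂⁺v`, `pr = K₂ᵀp`, a solution of the reduced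
system.  `Lq, Lv` are the partial gradients of the Lagrangian; by the chain rule
the reduced gradients are `K₂ᵀ Lq(K₂qr, K₂vr)` and `K₂ᵀ Lv(K₂qr, K₂vr)`, and
`f_L^M(qr,vr,t) = K₂ᵀ f_L(K₂qr, K₂vr, t)`. -/
theorem stmt6 {n m k : ℕ} (T : ℝ) (hT : 0 ≤ T)
    (K : Matrix (Fin n) (Fin m) ℝ) (K₂ : Matrix (Fin n) (Fin k) ℝ)
    (K₂p : Matrix (Fin k) (Fin n) ℝ) (hleft : K₂p * K₂ = 1)
    (Lq Lv : (Fin n → ℝ) → (Fin n → ℝ) → (Fin n → ℝ))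
    (fL : (Fin n → ℝ) → (Fin n → ℝ) → ℝ → (Fin n → ℝ))
    (hker : ∀ x : Fin n → ℝ, K₂.transpose.mulVec x = 0 ↔ ∃ y, K.mulVec y = x)
    (q v p dp : ℝ → Fin n → ℝ)
    -- dq/dt = v :
    (hq : ∀ t ∈ Icc 0 T, HasDerivAt q (v t) t)
    -- dp/dt exists :
    (hp : ∀ t ∈ Icc 0 T, HasDerivAt p (dp t) t)
    -- ∂L/∂q(q,v) − dp/dt + f_L(q,v,t) ∈ range(K) :
    (hKVL : ∀ t ∈ Icc 0 T, ∃ y : Fin m → ℝ,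
      Lq (q t) (v t) - dp t + fL (q t) (v t) t = K.mulVec y)
    -- p = ∂L/∂v(q,v) :
    (hleg : ∀ t ∈ Icc 0 T, p t = Lv (q t) (v t))
    -- Kᵀ v = 0 :
    (hKCL : ∀ t ∈ Icc 0 T, K.transpose.mulVec (v t) = 0)
    -- q and v take values in range(K₂) :
    (hqrange : ∀ t ∈ Icc 0 T, ∃ a, K₂.mulVec a = q t)
    (hvrange : ∀ t ∈ Icc 0 T, ∃ a, K₂.mulVec a = v t) :
    -- conclusions for qr = K₂⁺q, vr = K₂⁺v, pr = K₂ᵀp :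
    (∀ t ∈ Icc 0 T, HasDerivAt (fun s => K₂p.mulVec (q s)) (K₂p.mulVec (v t)) t) ∧
    (∀ t ∈ Icc 0 T, HasDerivAt (fun s => K₂.transpose.mulVec (p s))
      (K₂.transpose.mulVec
          (Lq (K₂.mulVec (K₂p.mulVec (q t))) (K₂.mulVec (K₂p.mulVec (v t)))) +
       K₂.transpose.mulVec
          (fL (K₂.mulVec (K₂p.mulVec (q t))) (K₂.mulVec (K₂p.mulVec (v t))) t)) t) ∧
    (∀ t ∈ Icc 0 T, K₂.transpose.mulVec (p t) =
      K₂.transpose.mulVec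
        (Lv (K₂.mulVec (K₂p.mulVec (q t))) (K₂.mulVec (K₂p.mulVec (v t))))) := by
  have hfix : ∀ (x : Fin n → ℝ), (∃ a, K₂.mulVec a = x) →
      K₂.mulVec (K₂p.mulVec x) = x := by
    rintro x ⟨a, rfl⟩
    rw [Matrix.mulVec_mulVec, Matrix.mulVec_mulVec, Matrix.mul_assoc, hleft,
      Matrix.mul_one]
  refine ⟨fun t ht => deriv_mulVec _ _ _ (hq t ht), fun t ht => ?_, fun t ht => ?_⟩
  · have hd := deriv_mulVec K₂.transpose p (dp t) (hp t ht)
    rw [hfix _ (hqrange t ht), hfix _ (hvrange t ht)]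
    obtain ⟨y, hy⟩ := hKVL t ht
    have h0 : K₂.transpose.mulVec (Lq (q t) (v t) - dp t + fL (q t) (v t) t) = 0 := by
      rw [hy]; exact (hker _).mpr ⟨y, rfl⟩
    rw [Matrix.mulVec_add, Matrix.mulVec_sub] at h0
    have key : K₂.transpose.mulVec (dp t) =
        K₂.transpose.mulVec (Lq (q t) (v t)) + K₂.transpose.mulVec (fL (q t) (v t) t) := by
      funext i
      have hi := congrFun h0 i
      simp only [Pi.sub_apply, Pi.add_apply, Pi.zero_apply] at hi
      simp only [Pi.add_apply]
      linarith
    rw [← key]; exact hd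
  · rw [hfix _ (hqrange t ht), hfix _ (hvrange t ht), hleg t ht]
end

section
/- The forward-Euler variational iteration for a linear circuit, given by the block matrix A = [[I, 0, 0], [0, K₂ᵀLK₂, −I], [h·K₂ᵀCK₂, h·K₂ᵀ diag(R) K₂, I]] acting on (q̃, ṽ, p̃), is uniquely solvable (A is invertible) if and only if the matrix K₂ᵀ(L + h·diag(R))K₂ is invertible. -/
open Matrix

/-- Proposition 2: the forward-Euler variational iteration matrix
`A = [[I,0,0],[0,K₂ᵀLK₂,−I],[h K₂ᵀCK₂, h K₂ᵀdiag(R)K₂, I]]` is invertible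
if and only if `K₂ᵀ(L + h diag(R))K₂` is invertible. -/
theorem stmt7 {n k : ℕ} (h : ℝ) (hh : 0 < h)
    (L C : Matrix (Fin n) (Fin n) ℝ) (R : Fin n → ℝ)
    (K₂ : Matrix (Fin n) (Fin k) ℝ) :
    IsUnit (Matrix.fromBlocks
      (1 : Matrix (Fin k) (Fin k) ℝ) (0 : Matrix (Fin k) (Fin k ⊕ Fin k) ℝ)
      (Matrix.fromRows (0 : Matrix (Fin k) (Fin k) ℝ)
        (h • (K₂.transpose * C * K₂)))
      (Matrix.fromBlocks
        (K₂.transpose * L * K₂) (-1 : Matrix (Fin k) (Fin k) ℝ)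
        (h • (K₂.transpose * Matrix.diagonal R * K₂)) (1 : Matrix (Fin k) (Fin k) ℝ)))
    ↔ IsUnit (K₂.transpose * (L + h • Matrix.diagonal R) * K₂) := by
  rw [Matrix.isUnit_iff_isUnit_det, Matrix.isUnit_iff_isUnit_det,
    Matrix.det_fromBlocks_zero₁₂, Matrix.det_one, one_mul,
    Matrix.det_fromBlocks_one₂₂]
  rw [sub_eq_add_neg, ← neg_mul, neg_neg, one_mul]
  rw [Matrix.mul_add, Matrix.add_mul, Matrix.mul_smul, Matrix.smul_mul]
end

section
/- The midpoint-rule variational iteration matrix A = [[I, −hI, 0], [0, K₂ᵀLK₂, −½I], [½h·K₂ᵀCK₂, h·K₂ᵀ diag(R) K₂, I]] is invertible if the matrix K₂ᵀ(2L + h·diag(R) + ½h²C)K₂ is invertible. -/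
open Matrix

/-- Proposition 4: the midpoint-rule variational iteration matrix
`A = [[I,−hI,0],[0,K₂ᵀLK₂,−½I],[½h K₂ᵀCK₂, h K₂ᵀdiag(R)K₂, I]]` is invertible
if `K₂ᵀ(2L + h diag(R) + ½h²C)K₂` is invertible. -/
theorem stmt9 {n k : ℕ} (h : ℝ) (hh : 0 < h)
    (L C : Matrix (Fin n) (Fin n) ℝ) (R : Fin n → ℝ)
    (hLsymm : L.IsSymm) (hCsymm : C.IsSymm)
    (K₂ : Matrix (Fin n) (Fin k) ℝ)
    (hreg : IsUnit (K₂.transpose *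
      ((2 : ℝ) • L + h • Matrix.diagonal R + ((1/2) * h^2) • C) * K₂)) :
    IsUnit (Matrix.fromBlocks
      (1 : Matrix (Fin k) (Fin k) ℝ)
      (Matrix.fromCols (-(h • (1 : Matrix (Fin k) (Fin k) ℝ)))
        (0 : Matrix (Fin k) (Fin k) ℝ))
      (Matrix.fromRows (0 : Matrix (Fin k) (Fin k) ℝ)
        (((1:ℝ)/2 * h) • (K₂.transpose * C * K₂)))
      (Matrix.fromBlocks
        (K₂.transpose * L * K₂) (-((1/2 : ℝ) • (1 : Matrix (Fin k) (Fin k) ℝ)))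
        (h • (K₂.transpose * Matrix.diagonal R * K₂))
        (1 : Matrix (Fin k) (Fin k) ℝ))) := by
  classical
  set LK : Matrix (Fin k) (Fin k) ℝ := K₂.transpose * L * K₂ with hLK
  set RK : Matrix (Fin k) (Fin k) ℝ := K₂.transpose * Matrix.diagonal R * K₂ with hRK
  set CK : Matrix (Fin k) (Fin k) ℝ := K₂.transpose * C * K₂ with hCK
  letI : Invertible (1 : Matrix (Fin k) (Fin k) ℝ) := invertibleOne
  -- half of the regularity matrix is a unit
  have hhalf : IsUnit (((1:ℝ)/2) • (K₂.transpose *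
      ((2 : ℝ) • L + h • Matrix.diagonal R + ((1/2) * h^2) • C) * K₂)) := by
    have h1 : IsUnit ((((1:ℝ)/2) • (1 : Matrix (Fin k) (Fin k) ℝ))) := by
      have e : (((1:ℝ)/2) • (1 : Matrix (Fin k) (Fin k) ℝ)) * ((2:ℝ) • (1 : Matrix (Fin k) (Fin k) ℝ)) = 1 := by
        rw [smul_mul_smul_comm]; norm_num
      have e' : ((2:ℝ) • (1 : Matrix (Fin k) (Fin k) ℝ)) * (((1:ℝ)/2) • (1 : Matrix (Fin k) (Fin k) ℝ)) = 1 := by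
        rw [smul_mul_smul_comm]; norm_num
      exact @isUnit_of_invertible _ _ _ ⟨_, e', e⟩
    have := h1.mul hreg
    rwa [Matrix.smul_mul, Matrix.one_mul] at this
  -- the inner Schur complement
  have hS : IsUnit (LK - (-((1/2 : ℝ) • (1 : Matrix (Fin k) (Fin k) ℝ))) *
      ⅟(1 : Matrix (Fin k) (Fin k) ℝ) *
      (h • RK + ((1:ℝ)/2 * h^2) • CK)) := by
    convert hhalf using 1
    rw [invOf_one, Matrix.mul_one, hLK, hRK, hCK]
    simp only [Matrix.mul_add, Matrix.add_mul, Matrix.mul_smul, Matrix.smul_mul,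
      Matrix.neg_mul, Matrix.mul_neg, sub_neg_eq_add, Matrix.one_mul, Matrix.mul_one,
      smul_add, smul_smul, neg_smul, smul_neg]
    module
  -- invertibility of the inner block matrix
  obtain ⟨iS⟩ := hS.nonempty_invertible
  letI iInner : Invertible (Matrix.fromBlocks LK (-((1/2 : ℝ) • (1 : Matrix (Fin k) (Fin k) ℝ)))
      (h • RK + ((1:ℝ)/2 * h^2) • CK) (1 : Matrix (Fin k) (Fin k) ℝ)) :=
    Matrix.fromBlocks₂₂Invertible _ _ _ _
  -- the outer Schur complement equals the inner block matrix
  have houter : (Matrix.fromBlocks LK (-((1/2 : ℝ) • (1 : Matrix (Fin k) (Fin k) ℝ)))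
        (h • RK) (1 : Matrix (Fin k) (Fin k) ℝ))
      - (Matrix.fromRows (0 : Matrix (Fin k) (Fin k) ℝ) (((1:ℝ)/2 * h) • CK)) *
        ⅟(1 : Matrix (Fin k) (Fin k) ℝ) *
        (Matrix.fromCols (-(h • (1 : Matrix (Fin k) (Fin k) ℝ)))
          (0 : Matrix (Fin k) (Fin k) ℝ))
      = Matrix.fromBlocks LK (-((1/2 : ℝ) • (1 : Matrix (Fin k) (Fin k) ℝ)))
          (h • RK + ((1:ℝ)/2 * h^2) • CK) (1 : Matrix (Fin k) (Fin k) ℝ) := by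
    rw [invOf_one, Matrix.mul_one, Matrix.fromRows_mul_fromCols]
    ext (i | i) (j | j) <;>
      simp [Matrix.fromBlocks, Matrix.smul_mul, Matrix.mul_smul, smul_smul, sub_eq_add_neg,
        mul_comm, mul_assoc, mul_left_comm] <;> ring_nf <;>
      simp [Matrix.add_apply, Matrix.smul_apply, Matrix.neg_apply] <;> ring
  letI iS' : Invertible ((Matrix.fromBlocks LK (-((1/2 : ℝ) • (1 : Matrix (Fin k) (Fin k) ℝ)))
        (h • RK) (1 : Matrix (Fin k) (Fin k) ℝ))
      - (Matrix.fromRows (0 : Matrix (Fin k) (Fin k) ℝ) (((1:ℝ)/2 * h) • CK)) *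
        ⅟(1 : Matrix (Fin k) (Fin k) ℝ) *
        (Matrix.fromCols (-(h • (1 : Matrix (Fin k) (Fin k) ℝ)))
          (0 : Matrix (Fin k) (Fin k) ℝ))) := iInner.copy _ houter
  letI : Invertible (1 : Matrix (Fin k ⊕ Fin k) (Fin k ⊕ Fin k) ℝ) := invertibleOne
  letI iBig := Matrix.fromBlocks₁₁Invertible
    (1 : Matrix (Fin k) (Fin k) ℝ)
    (Matrix.fromCols (-(h • (1 : Matrix (Fin k) (Fin k) ℝ)))
      (0 : Matrix (Fin k) (Fin k) ℝ))
    (Matrix.fromRows (0 : Matrix (Fin k) (Fin k) ℝ) (((1:ℝ)/2 * h) • CK))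
    (Matrix.fromBlocks LK (-((1/2 : ℝ) • (1 : Matrix (Fin k) (Fin k) ℝ)))
        (h • RK) (1 : Matrix (Fin k) (Fin k) ℝ))
  exact isUnit_of_invertible _
end
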